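/- Let E be a finite ground set, (𝒫,⪯) a submodular, consecutive lattice of subsets of E, and π : 𝒫 → (−∞,1] monotone and supermodular w.r.t. the lattice. Let ρ ∈ Y⁺ admit a greedy support e_1,…,e_m, P_1,…,P_m, and let S ⊆ E fulfil condition (good-S) for this greedy support. Then S ∩ Q ≠ ∅ for every Q ∈ 𝒫 with π_Q > 0 that is non-dominated with respect to π and ρ in {Q' ∈ 𝒫 : π_{Q'} > 0}. -/

import Mathlib

open Finset

variable {α : Type*} [Fintype α] [DecidableEq α]

/-- A submodular, consecutive lattice `(PP, ⪯)` of subsets of the finite ground set `E = α`: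
a partial order `le` on the collection `sets` in which every pair has a meet (greatest common
lower bound) and a join (least common upper bound), satisfying submodularity (SM) and
consecutivity (CS). -/
structure SubmodConsecLattice (α : Type*) [Fintype α] [DecidableEq α] where
  sets : Finset (Finset α)
  le : Finset α → Finset α → Prop
  meet : Finset α → Finset α → Finset α
  join : Finset α → Finset α → Finset α
  le_refl : ∀ P ∈ sets, le P P
  le_antisymm : ∀ P ∈ sets, ∀ Q ∈ sets, le P Q → le Q P → P = Q
  le_trans : ∀ P ∈ sets, ∀ Q ∈ sets, ∀ R ∈ sets, le P Q → le Q R → le P R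
  meet_mem : ∀ P ∈ sets, ∀ Q ∈ sets, meet P Q ∈ sets
  meet_le_left : ∀ P ∈ sets, ∀ Q ∈ sets, le (meet P Q) P
  meet_le_right : ∀ P ∈ sets, ∀ Q ∈ sets, le (meet P Q) Q
  le_meet : ∀ P ∈ sets, ∀ Q ∈ sets, ∀ R ∈ sets, le R P → le R Q → le R (meet P Q)
  join_mem : ∀ P ∈ sets, ∀ Q ∈ sets, join P Q ∈ sets
  left_le_join : ∀ P ∈ sets, ∀ Q ∈ sets, le P (join P Q)
  right_le_join : ∀ P ∈ sets, ∀ Q ∈ sets, le Q (join P Q)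
  join_le : ∀ P ∈ sets, ∀ Q ∈ sets, ∀ R ∈ sets, le P R → le Q R → le (join P Q) R
  /-- submodularity (SM): `1[e ∈ P∨Q] + 1[e ∈ P∧Q] ≤ 1[e ∈ P] + 1[e ∈ Q]`. -/
  submod : ∀ P ∈ sets, ∀ Q ∈ sets, ∀ e : α,
    (if e ∈ join P Q then (1 : ℕ) else 0) + (if e ∈ meet P Q then 1 else 0) ≤
      (if e ∈ P then 1 else 0) + (if e ∈ Q then 1 else 0)
  /-- consecutivity (CS): `P ∩ R ⊆ Q` whenever `P ≺ Q ≺ R`. -/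
  consec : ∀ P ∈ sets, ∀ Q ∈ sets, ∀ R ∈ sets,
    le P Q → P ≠ Q → le Q R → Q ≠ R → P ∩ R ⊆ Q

/-- `y` lies in the polyhedron `Y⁺ = {y ∈ ℝ^E_{≥0} : ∑_{e ∈ P} y e ≥ π P for all P ∈ PP}`. -/
def MemYplus (PP : Finset (Finset α)) (π : Finset α → ℝ) (y : α → ℝ) : Prop :=
  (∀ e, 0 ≤ y e) ∧ ∀ P ∈ PP, π P ≤ ∑ e ∈ P, y e

/-- `ρ` is an extreme point of `Y⁺`: it lies in `Y⁺` and does not lie in the open segment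
between two distinct points of `Y⁺`. -/
def IsExtremePt (PP : Finset (Finset α)) (π : Finset α → ℝ) (ρ : α → ℝ) : Prop :=
  MemYplus PP π ρ ∧ ∀ y1 y2 : α → ℝ, MemYplus PP π y1 → MemYplus PP π y2 →
    ∀ t : ℝ, 0 < t → t < 1 → (∀ e, ρ e = t * y1 e + (1 - t) * y2 e) → y1 = y2

/-- `es, Ps` form a greedy support for `ρ ∈ Y⁺`: (G1) `es i ∈ Ps i`; (G2) `Ps i` is the
`⪯`-maximum of `{P ∈ PP : P ⊆ E ∖ {es 0, …, es (i-1)}}`; (G3) `π (Ps i) > 0` for all `i` and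
`π Q ≤ 0` for all `Q ∈ PP` avoiding all `es i`; (G4) `ρ` is the unique solution of the
corresponding linear system. -/
def IsGreedySupport (PP : Finset (Finset α)) (le : Finset α → Finset α → Prop)
    (π : Finset α → ℝ) (ρ : α → ℝ) (m : ℕ) (es : Fin m → α) (Ps : Fin m → Finset α) : Prop :=
  (∀ i, es i ∈ Ps i) ∧
  (∀ i, Ps i ∈ PP ∧ (∀ j, j < i → es j ∉ Ps i) ∧
    ∀ P ∈ PP, (∀ j, j < i → es j ∉ P) → le P (Ps i)) ∧
  (∀ i, 0 < π (Ps i)) ∧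
  (∀ Q ∈ PP, (∀ i, es i ∉ Q) → π Q ≤ 0) ∧
  ((∀ i, ∑ x ∈ Ps i, ρ x = π (Ps i)) ∧ (∀ x, (∀ i, x ≠ es i) → ρ x = 0)) ∧
  (∀ ρ' : α → ℝ, (∀ i, ∑ x ∈ Ps i, ρ' x = π (Ps i)) → (∀ x, (∀ i, x ≠ es i) → ρ' x = 0) →
    ρ' = ρ)

/-- `S` fulfils condition (good-S) for the greedy support `Ps`: `S ⊆ E_ρ` and `|S ∩ Ps i| = 1`
for all `i`. -/
def GoodS (ρ : α → ℝ) {m : ℕ} (Ps : Fin m → Finset α) (S : Finset α) : Prop :=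
  (∀ e ∈ S, 0 < ρ e) ∧ ∀ i, (S ∩ Ps i).card = 1

/-- The dominance relation `P ⊑_{π,ρ} Q`. -/
def Dominates (π : Finset α → ℝ) (ρ : α → ℝ) (P Q : Finset α) : Prop :=
  P = Q ∨ (π P < π Q ∧ π P ≤ π Q - ∑ e ∈ Q \ P, ρ e)

/-- `P` is non-dominated (w.r.t. `π` and `ρ`) in `PP'`. -/
def NonDominated (π : Finset α → ℝ) (ρ : α → ℝ) (PP' : Finset (Finset α)) (P : Finset α) : Prop :=
  P ∈ PP' ∧ ∀ Q ∈ PP', Q ≠ P → ¬ Dominates π ρ P Q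

/-- `S` is an admissible support candidate (ASC) for `π` and `ρ`. -/
def IsASC (PP : Finset (Finset α)) (π : Finset α → ℝ) (ρ : α → ℝ) (S : Finset α) : Prop :=
  (∀ e ∈ S, 0 < ρ e) ∧
  (∀ P ∈ PP, ∑ e ∈ P, ρ e = π P → (S ∩ P).card ≤ 1) ∧
  (∀ P, NonDominated π ρ (PP.filter fun Q => 0 < π Q) P → 1 ≤ (S ∩ P).card)

/-- If `S` fulfils (good-S) for a greedy support of `ρ ∈ Y⁺`, then `S ∩ Q ≠ ∅` for every
`Q ∈ PP` with `π Q > 0` that is non-dominated in `{Q' ∈ PP : π Q' > 0}`. -/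
theorem lattice_goodS_nondominated (L : SubmodConsecLattice α) (π : Finset α → ℝ)
    (hπ1 : ∀ P ∈ L.sets, π P ≤ 1)
    (hsup : ∀ P ∈ L.sets, ∀ Q ∈ L.sets, π P + π Q ≤ π (L.join P Q) + π (L.meet P Q))
    (hmono : ∀ P ∈ L.sets, ∀ Q ∈ L.sets, L.le P Q → π P ≤ π Q)
    (ρ : α → ℝ) (hY : MemYplus L.sets π ρ)
    (m : ℕ) (es : Fin m → α) (Ps : Fin m → Finset α)
    (hgs : IsGreedySupport L.sets L.le π ρ m es Ps)
    (S : Finset α) (hS : GoodS ρ Ps S) :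
    ∀ Q, NonDominated π ρ (L.sets.filter fun Q' => 0 < π Q') Q → (S ∩ Q).Nonempty := by
  -- unpack hypotheses
  obtain ⟨hρ0, _hYfeas⟩ := hY
  obtain ⟨hG1, hG2, _hG3a, hG3b, ⟨hG4sum, hG4zero⟩, _hG4uniq⟩ := hgs
  obtain ⟨hSpos, hScard⟩ := hS
  have hPmem : ∀ i, Ps i ∈ L.sets := fun i => (hG2 i).1
  have hPavoid : ∀ i, ∀ j, j < i → es j ∉ Ps i := fun i => (hG2 i).2.1
  have hPmax : ∀ i, ∀ P ∈ L.sets, (∀ j, j < i → es j ∉ P) → L.le P (Ps i) :=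
    fun i => (hG2 i).2.2
  have hrnn : ∀ A : Finset α, (0:ℝ) ≤ ∑ e ∈ A, ρ e :=
    fun A => Finset.sum_nonneg (fun e _ => hρ0 e)
  have hsum_mono : ∀ A B : Finset α, A ⊆ B → ∑ e ∈ A, ρ e ≤ ∑ e ∈ B, ρ e :=
    fun A B h => Finset.sum_le_sum_of_subset_of_nonneg h (fun i _ _ => hρ0 i)
  -- pointwise submodularity helpers
  have hjoin_sub : ∀ A, A ∈ L.sets → ∀ B, B ∈ L.sets → ∀ x, x ∈ L.join A B → x ∈ A ∨ x ∈ B := by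
    intro A hA B hB x hx
    by_contra hc
    push_neg at hc
    have h := L.submod A hA B hB x
    rw [if_pos hx, if_neg hc.1, if_neg hc.2] at h
    split_ifs at h <;> omega
  have hmeet_sub : ∀ A, A ∈ L.sets → ∀ B, B ∈ L.sets → ∀ x, x ∈ L.meet A B → x ∈ A ∨ x ∈ B := by
    intro A hA B hB x hx
    by_contra hc
    push_neg at hc
    have h := L.submod A hA B hB x
    rw [if_pos hx, if_neg hc.1, if_neg hc.2] at h
    split_ifs at h <;> omega
  have hjoin_mem : ∀ A, A ∈ L.sets → ∀ B, B ∈ L.sets → ∀ x, x ∈ L.join A B → x ∉ A →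
      x ∈ B ∧ x ∉ L.meet A B := by
    intro A hA B hB x hxJ hxA
    have h := L.submod A hA B hB x
    rw [if_pos hxJ, if_neg hxA] at h
    constructor
    · by_contra hB'
      rw [if_neg hB'] at h
      split_ifs at h <;> omega
    · intro hM
      rw [if_pos hM] at h
      split_ifs at h <;> omega
  -- the main induction (on the budget d, peeling levels k)
  have Lmain : ∀ d k : ℕ, m ≤ k + d → ∀ Q, Q ∈ L.sets → 0 < π Q →
      (∀ i : Fin m, (i : ℕ) < k → es i ∉ Q) →
      (∀ R, R ∈ L.sets → 0 < π R → (∀ i : Fin m, (i : ℕ) < k → es i ∉ R) → R ≠ Q →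
        ¬ Dominates π ρ Q R) →
      (S ∩ Q).Nonempty := by
    intro d
    induction d with
    | zero =>
      intro k hk Q hQmem hQpos hQav _
      have : π Q ≤ 0 := hG3b Q hQmem (fun i => hQav i (lt_of_lt_of_le i.isLt (by omega)))
      linarith
    | succ d ih =>
      intro k hk Q hQmem hQpos hQav hQnd
      by_cases hkm : m ≤ k
      · have : π Q ≤ 0 := hG3b Q hQmem (fun i => hQav i (lt_of_lt_of_le i.isLt hkm))
        linarith
      push_neg at hkm
      set κ : Fin m := ⟨k, hkm⟩ with hκdef
      by_cases heκ : es κ ∈ Q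
      swap
      · -- e_{k+1} ∉ Q : recurse at level k+1
        apply ih (k + 1) (by omega) Q hQmem hQpos
        · intro i hi
          rcases Nat.lt_succ_iff_lt_or_eq.mp hi with h | h
          · exact hQav i h
          · have hiκ : i = κ := Fin.eq_of_val_eq h
            rw [hiκ]; exact heκ
        · intro R hR hRpos hRav hne
          exact hQnd R hR hRpos (fun i hi => hRav i (by omega)) hne
      -- main case : e_{k+1} ∈ Q
      obtain ⟨s, hsEq⟩ := Finset.card_eq_one.mp (hScard κ)
      have hsmem : s ∈ S ∩ Ps κ := by rw [hsEq]; exact Finset.mem_singleton_self s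
      have hsS : s ∈ S := (Finset.mem_inter.mp hsmem).1
      have hsPκ : s ∈ Ps κ := (Finset.mem_inter.mp hsmem).2
      by_cases hsQ : s ∈ Q
      · exact ⟨s, Finset.mem_inter.mpr ⟨hsS, hsQ⟩⟩
      have hρs : 0 < ρ s := hSpos s hsS
      have hsb : ∃ b : Fin m, s = es b := by
        by_contra hc
        push_neg at hc
        have := hG4zero s hc
        linarith
      obtain ⟨b, hsb⟩ := hsb
      have hebPκ : es b ∈ Ps κ := hsb ▸ hsPκ
      have hebQ : es b ∉ Q := hsb ▸ hsQ
      have hebS : es b ∈ S := hsb ▸ hsS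
      have hρeb : 0 < ρ (es b) := hsb ▸ hρs
      have hbκ : κ < b := by
        rcases lt_trichotomy b κ with h | h | h
        · exact absurd hebPκ (hPavoid κ b h)
        · exact absurd (h ▸ heκ) hebQ
        · exact h
      have hkb : k < (b : ℕ) := Fin.lt_def.mp hbκ
      have hQlePκ : L.le Q (Ps κ) :=
        hPmax κ Q hQmem (fun j hj => hQav j hj)
      have hPblePκ : L.le (Ps b) (Ps κ) :=
        hPmax κ (Ps b) (hPmem b) (fun j hj => hPavoid b j (lt_trans hj hbκ))
      have heκPb : es κ ∉ Ps b := hPavoid b κ hbκ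
      have hQnePκ : Q ≠ Ps κ := fun h => hsQ (h ▸ hsPκ)
      have hQnePb : Q ≠ Ps b := fun h => heκPb (h ▸ heκ)
      have hPbnePκ : Ps b ≠ Ps κ := fun h => heκPb (h ▸ (hG1 κ))
      -- Q and P_b are incomparable
      have hQPb_not : ¬ L.le Q (Ps b) := by
        intro h
        have hsub := L.consec Q hQmem (Ps b) (hPmem b) (Ps κ) (hPmem κ) h hQnePb hPblePκ hPbnePκ
        exact heκPb (hsub (Finset.mem_inter.mpr ⟨heκ, hG1 κ⟩))
      have hPbQ_not : ¬ L.le (Ps b) Q := by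
        intro h
        have hsub := L.consec (Ps b) (hPmem b) Q hQmem (Ps κ) (hPmem κ) h (Ne.symm hQnePb)
          hQlePκ hQnePκ
        exact hebQ (hsub (Finset.mem_inter.mpr ⟨hG1 b, hebPκ⟩))
      set M : Finset α := L.meet Q (Ps b) with hMdef
      set J : Finset α := L.join Q (Ps b) with hJdef
      have hMmem : M ∈ L.sets := L.meet_mem Q hQmem (Ps b) (hPmem b)
      have hJmem : J ∈ L.sets := L.join_mem Q hQmem (Ps b) (hPmem b)
      have hMleQ : L.le M Q := L.meet_le_left Q hQmem (Ps b) (hPmem b)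
      have hMlePb : L.le M (Ps b) := L.meet_le_right Q hQmem (Ps b) (hPmem b)
      have hQleJ : L.le Q J := L.left_le_join Q hQmem (Ps b) (hPmem b)
      have hPbleJ : L.le (Ps b) J := L.right_le_join Q hQmem (Ps b) (hPmem b)
      have hMneQ : M ≠ Q := fun h => hQPb_not (h ▸ hMlePb)
      have hMnePb : M ≠ Ps b := fun h => hPbQ_not (h ▸ hMleQ)
      have hJneQ : J ≠ Q := fun h => hPbQ_not (h ▸ hPbleJ)
      have hJnePb : J ≠ Ps b := fun h => hQPb_not (h ▸ hQleJ)
      have hMPκsubQ : M ∩ Ps κ ⊆ Q :=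
        L.consec M hMmem Q hQmem (Ps κ) (hPmem κ) hMleQ hMneQ hQlePκ hQnePκ
      have hebM : es b ∉ M := fun h => hebQ (hMPκsubQ (Finset.mem_inter.mpr ⟨h, hebPκ⟩))
      have hJlePκ : L.le J (Ps κ) :=
        L.join_le Q hQmem (Ps b) (hPmem b) (Ps κ) (hPmem κ) hQlePκ hPblePκ
      have hebJ : es b ∈ J := by
        by_cases hJκ : J = Ps κ
        · rw [hJκ]; exact hebPκ
        · exact L.consec (Ps b) (hPmem b) J hJmem (Ps κ) (hPmem κ) hPbleJ (Ne.symm hJnePb)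
            hJlePκ hJκ (Finset.mem_inter.mpr ⟨hG1 b, hebPκ⟩)
      -- M avoids e_1, …, e_b
      have hMavoid : ∀ i : Fin m, (i : ℕ) < (b : ℕ) + 1 → es i ∉ M := by
        intro i hi hmemM
        rcases lt_trichotomy (i : ℕ) k with hik | hik | hik
        · rcases hmeet_sub Q hQmem (Ps b) (hPmem b) (es i) hmemM with h | h
          · exact hQav i hik h
          · exact hPavoid b i (by rw [Fin.lt_def]; omega) h
        · -- k ≤ i < b (including i = κ): use consecutivity M ⪯ P_b ⪯ P_i
          have hib : (i : ℕ) < (b : ℕ) := by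
            rcases Nat.lt_succ_iff_lt_or_eq.mp hi with h | h
            · exact h
            · exfalso
              have : i = b := Fin.eq_of_val_eq h
              exact hebM (this ▸ hmemM)
          have hPblePi : L.le (Ps b) (Ps i) :=
            hPmax i (Ps b) (hPmem b) (fun j hj => hPavoid b j (by rw [Fin.lt_def] at hj ⊢; omega))
          have hPbnePi : Ps b ≠ Ps i := fun h =>
            (hPavoid b i (by rw [Fin.lt_def]; omega)) (h ▸ (hG1 i))
          have hsub := L.consec M hMmem (Ps b) (hPmem b) (Ps i) (hPmem i) hMlePb hMnePb
            hPblePi hPbnePi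
          exact (hPavoid b i (by rw [Fin.lt_def]; omega))
            (hsub (Finset.mem_inter.mpr ⟨hmemM, hG1 i⟩))
        · -- same argument works for any k ≤ i < b; i = b handled above
          have hib : (i : ℕ) < (b : ℕ) := by
            rcases Nat.lt_succ_iff_lt_or_eq.mp hi with h | h
            · exact h
            · exfalso
              have : i = b := Fin.eq_of_val_eq h
              exact hebM (this ▸ hmemM)
          have hPblePi : L.le (Ps b) (Ps i) :=
            hPmax i (Ps b) (hPmem b) (fun j hj => hPavoid b j (by rw [Fin.lt_def] at hj ⊢; omega))
          have hPbnePi : Ps b ≠ Ps i := fun h =>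
            (hPavoid b i (by rw [Fin.lt_def]; omega)) (h ▸ (hG1 i))
          have hsub := L.consec M hMmem (Ps b) (hPmem b) (Ps i) (hPmem i) hMlePb hMnePb
            hPblePi hPbnePi
          exact (hPavoid b i (by rw [Fin.lt_def]; omega))
            (hsub (Finset.mem_inter.mpr ⟨hmemM, hG1 i⟩))
      -- key dichotomy
      by_cases hstar : π M ≤ ∑ e ∈ M ∩ Ps b, ρ e
      · -- J dominates Q : contradiction with non-domination of Q
        exfalso
        have hsupQPb := hsup Q hQmem (Ps b) (hPmem b)
        have htb : ∑ x ∈ Ps b, ρ x = π (Ps b) := hG4sum b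
        have hsplit : ∑ e ∈ Ps b ∩ M, ρ e + ∑ e ∈ Ps b \ M, ρ e = ∑ e ∈ Ps b, ρ e :=
          Finset.sum_inter_add_sum_sdiff (Ps b) M ρ
        have hinterc : ∑ e ∈ M ∩ Ps b, ρ e = ∑ e ∈ Ps b ∩ M, ρ e := by
          rw [Finset.inter_comm]
        have hJQsub : J \ Q ⊆ Ps b \ M := by
          intro x hx
          rw [Finset.mem_sdiff] at hx ⊢
          exact And.intro ((hjoin_mem Q hQmem (Ps b) (hPmem b) x hx.1 hx.2).1)
            ((hjoin_mem Q hQmem (Ps b) (hPmem b) x hx.1 hx.2).2)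
        have hJQle : ∑ e ∈ J \ Q, ρ e ≤ ∑ e ∈ Ps b \ M, ρ e := hsum_mono _ _ hJQsub
        have hebsd : es b ∈ Ps b \ M := Finset.mem_sdiff.mpr ⟨hG1 b, hebM⟩
        have hsingle : ρ (es b) ≤ ∑ e ∈ Ps b \ M, ρ e :=
          Finset.single_le_sum (f := ρ) (fun i _ => hρ0 i) hebsd
        have hJpos : 0 < π J := by linarith
        have hJavoid : ∀ i : Fin m, (i : ℕ) < k → es i ∉ J := by
          intro i hi hmemJ
          rcases hjoin_sub Q hQmem (Ps b) (hPmem b) (es i) hmemJ with h | h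
          · exact hQav i hi h
          · exact hPavoid b i (by rw [Fin.lt_def]; omega) h
        exact hQnd J hJmem hJpos hJavoid hJneQ
          (Or.inr ⟨by linarith, by linarith⟩)
      · -- (★) : M is non-dominated at level b+1 ; recurse on M
        push_neg at hstar
        have hMpos : 0 < π M := lt_of_le_of_lt (hrnn (M ∩ Ps b)) hstar
        have hMnd : ∀ R, R ∈ L.sets → 0 < π R →
            (∀ i : Fin m, (i : ℕ) < (b : ℕ) + 1 → es i ∉ R) → R ≠ M →
            ¬ Dominates π ρ M R := by
          intro R hRmem hRpos hRav hRneM hdom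
          rcases hdom with h | ⟨hlt, hle⟩
          · exact hRneM h.symm
          have hRlePb : L.le R (Ps b) :=
            hPmax b R hRmem (fun j hj => hRav j (by rw [Fin.lt_def] at hj; omega))
          set V : Finset α := L.meet Q R with hVdef
          set W : Finset α := L.join Q R with hWdef
          have hVmem : V ∈ L.sets := L.meet_mem Q hQmem R hRmem
          have hWmem : W ∈ L.sets := L.join_mem Q hQmem R hRmem
          have hVleQ : L.le V Q := L.meet_le_left Q hQmem R hRmem
          have hVleR : L.le V R := L.meet_le_right Q hQmem R hRmem
          have hQleW : L.le Q W := L.left_le_join Q hQmem R hRmem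
          have hRleW : L.le R W := L.right_le_join Q hQmem R hRmem
          have hVleM : L.le V M :=
            L.le_meet Q hQmem (Ps b) (hPmem b) V hVmem hVleQ
              (L.le_trans V hVmem R hRmem (Ps b) (hPmem b) hVleR hRlePb)
          have hπVM : π V ≤ π M := hmono V hVmem M hMmem hVleM
          have hRnotleQ : ¬ L.le R Q := by
            intro h
            have : L.le R M := L.le_meet Q hQmem (Ps b) (hPmem b) R hRmem h hRlePb
            have := hmono R hRmem M hMmem this
            linarith
          have hWneQ : W ≠ Q := fun h => hRnotleQ (h ▸ hRleW)
          have hMWsubQ : M ∩ W ⊆ Q :=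
            L.consec M hMmem Q hQmem W hWmem hMleQ hMneQ hQleW (Ne.symm hWneQ)
          have hWQsub : W \ Q ⊆ R \ M := by
            intro x hx
            rw [Finset.mem_sdiff] at hx ⊢
            refine ⟨(hjoin_mem Q hQmem R hRmem x hx.1 hx.2).1, fun hxM => ?_⟩
            exact hx.2 (hMWsubQ (Finset.mem_inter.mpr ⟨hxM, hx.1⟩))
          have hWQle : ∑ e ∈ W \ Q, ρ e ≤ ∑ e ∈ R \ M, ρ e := hsum_mono _ _ hWQsub
          have hsupQR := hsup Q hQmem R hRmem
          have hWpos : 0 < π W := by linarith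
          have hWavoid : ∀ i : Fin m, (i : ℕ) < k → es i ∉ W := by
            intro i hi hmemW
            rcases hjoin_sub Q hQmem R hRmem (es i) hmemW with h | h
            · exact hQav i hi h
            · exact hRav i (by omega) h
          exact hQnd W hWmem hWpos hWavoid hWneQ (Or.inr ⟨by linarith, by linarith⟩)
        -- recurse on M at level b+1
        have hx := ih ((b : ℕ) + 1) (by omega) M hMmem hMpos hMavoid hMnd
        obtain ⟨x, hx⟩ := hx
        have hxS : x ∈ S := (Finset.mem_inter.mp hx).1
        have hxM : x ∈ M := (Finset.mem_inter.mp hx).2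
        by_cases hxQ : x ∈ Q
        · exact ⟨x, Finset.mem_inter.mpr ⟨hxS, hxQ⟩⟩
        exfalso
        have hxPb : x ∈ Ps b := by
          rcases hmeet_sub Q hQmem (Ps b) (hPmem b) x hxM with h | h
          · exact absurd h hxQ
          · exact h
        obtain ⟨c, hcEq⟩ := Finset.card_eq_one.mp (hScard b)
        have h1 : x ∈ S ∩ Ps b := Finset.mem_inter.mpr ⟨hxS, hxPb⟩
        have h2 : es b ∈ S ∩ Ps b := Finset.mem_inter.mpr ⟨hebS, hG1 b⟩
        rw [hcEq, Finset.mem_singleton] at h1 h2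
        exact hebM (h1.trans h2.symm ▸ hxM)
  -- conclude the theorem from the main induction at level 0
  intro Q hQ
  obtain ⟨hQf, hQnd⟩ := hQ
  rw [Finset.mem_filter] at hQf
  exact Lmain m 0 (by omega) Q hQf.1 hQf.2 (fun i hi => absurd hi (by omega))
    (fun R hR hRpos _ hne => hQnd R (Finset.mem_filter.mpr ⟨hR, hRpos⟩) hne)
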